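/- In the MMWP reduction instance (3D-matching gadget), with voters V_X ∪ V_Y ∪ V_Z where |X|=|Y|=|Z|=k, unit weights, quota q=3, and a delegation graph H_d in which every voter in V_Z is a guru and every other voter delegates (directly or indirectly) to some voter in V_Z: the minimum delegative Banzhaf measure over all voters is at least 2^(−k−1) if and only if every delegation subtree rooted at a vertex of V_Z has exactly 3 vertices (one from each of V_X, V_Y, V_Z). -/

import Mathlib

open Finset
open scoped Classical

/-- Total weight of voters in `C` whose entire delegation chain (the iterates of `d`)
stays inside `C` (the "active" voters). -/
noncomputable def gamma {V : Type*} [Fintype V] (w : V → ℕ) (d : V → V) (C : Finset V) : ℕ :=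
  ∑ i ∈ C, if ∀ k : ℕ, d^[k] i ∈ C then w i else 0

/-- A coalition wins iff its active weight meets the quota. -/
def wins {V : Type*} [Fintype V] (w : V → ℕ) (d : V → V) (q : ℕ) (C : Finset V) : Prop :=
  q ≤ gamma w d C

/-- Voter `i` is a swing agent for coalition `C`. -/
noncomputable def swing {V : Type*} [Fintype V] (w : V → ℕ) (d : V → V) (q : ℕ)
    (i : V) (C : Finset V) : Prop :=
  ¬ wins w d q C ∧ wins w d q (insert i C)

/-- Number of coalitions `C ⊆ V \ {i}` for which `i` is a swing agent. -/
noncomputable def swingCount {V : Type*} [Fintype V] (w : V → ℕ) (d : V → V) (q : ℕ)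
    (i : V) : ℕ :=
  (((univ : Finset V).erase i).powerset.filter (fun C => swing w d q i C)).card

/-- Delegative Banzhaf measure. -/
noncomputable def DB {V : Type*} [Fintype V] (w : V → ℕ) (d : V → V) (q : ℕ) (i : V) : ℚ :=
  (swingCount w d q i : ℚ) / 2 ^ (Fintype.card V - 1)

/-- Delegative Shapley-Shubik index. -/
noncomputable def DS {V : Type*} [Fintype V] (w : V → ℕ) (d : V → V) (q : ℕ) (i : V) : ℚ :=
  ∑ C ∈ ((univ : Finset V).erase i).powerset,
    if swing w d q i C then
      (Nat.factorial C.card * Nat.factorial (Fintype.card V - C.card - 1) : ℚ) /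
        Nat.factorial (Fintype.card V)
    else 0

/-- The set of voters in the delegation tree rooted at `g`. -/
noncomputable def treeOf {V : Type*} [Fintype V] (d : V → V) (g : V) : Finset V :=
  (univ : Finset V).filter (fun l => ∃ k, d^[k] l = g)

section Stmt17Aux

variable {k : ℕ}

/-- Second coordinate of the delegate of an X-voter. -/
def pm (d : Fin 3 × Fin k → Fin 3 × Fin k) (a : Fin k) : Fin k := (d (0, a)).2

/-- Second coordinate of the delegate of a Y-voter. -/
def rm (d : Fin 3 × Fin k → Fin 3 × Fin k) (b : Fin k) : Fin k := (d (1, b)).2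

noncomputable local instance (priority := 3000) stmt17DecEq {k : ℕ} :
    DecidableEq (Fin 3 × Fin k) := fun a b => Classical.propDecidable _

lemma fin3_cases : ∀ s : Fin 3, s = 0 ∨ s = 1 ∨ s = 2 := by decide

variable {d : Fin 3 × Fin k → Fin 3 × Fin k}

lemma dXeq (hX : ∀ a : Fin k, (d (0, a)).1 = 1) (a : Fin k) : d (0, a) = (1, pm d a) :=
  Prod.ext (hX a) rfl

lemma dYeq (hY : ∀ a : Fin k, (d (1, a)).1 = 2) (b : Fin k) : d (1, b) = (2, rm d b) :=
  Prod.ext (hY b) rfl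

lemma itZ (hZ : ∀ a : Fin k, d (2, a) = (2, a)) (c : Fin k) (n : ℕ) :
    d^[n] (2, c) = (2, c) :=
  Function.iterate_fixed (hZ c) n

lemma itY (hY : ∀ a : Fin k, (d (1, a)).1 = 2) (hZ : ∀ a : Fin k, d (2, a) = (2, a))
    (b : Fin k) (n : ℕ) : d^[n + 1] (1, b) = (2, rm d b) := by
  rw [Function.iterate_succ_apply, dYeq hY b]
  exact itZ hZ _ n

lemma itX (hX : ∀ a : Fin k, (d (0, a)).1 = 1) (hY : ∀ a : Fin k, (d (1, a)).1 = 2)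
    (hZ : ∀ a : Fin k, d (2, a) = (2, a)) (a : Fin k) (n : ℕ) :
    d^[n + 2] (0, a) = (2, rm d (pm d a)) := by
  rw [show n + 2 = (n + 1) + 1 from rfl, Function.iterate_succ_apply, dXeq hX a]
  exact itY hY hZ _ n

lemma itY1 (hY : ∀ a : Fin k, (d (1, a)).1 = 2) (hZ : ∀ a : Fin k, d (2, a) = (2, a))
    (b : Fin k) : d^[1] (1, b) = (2, rm d b) := itY hY hZ b 0

lemma itX2 (hX : ∀ a : Fin k, (d (0, a)).1 = 1) (hY : ∀ a : Fin k, (d (1, a)).1 = 2)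
    (hZ : ∀ a : Fin k, d (2, a) = (2, a)) (a : Fin k) :
    d^[2] (0, a) = (2, rm d (pm d a)) := itX hX hY hZ a 0

lemma activeZ_iff (hZ : ∀ a : Fin k, d (2, a) = (2, a)) {c : Fin k} {C : Finset (Fin 3 × Fin k)} :
    (∀ n : ℕ, d^[n] (2, c) ∈ C) ↔ (2, c) ∈ C :=
  ⟨fun h => h 0, fun h n => by rw [itZ hZ]; exact h⟩

lemma activeY_iff (hY : ∀ a : Fin k, (d (1, a)).1 = 2) (hZ : ∀ a : Fin k, d (2, a) = (2, a))
    {b : Fin k} {C : Finset (Fin 3 × Fin k)} :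
    (∀ n : ℕ, d^[n] (1, b) ∈ C) ↔ ((1, b) ∈ C ∧ (2, rm d b) ∈ C) := by
  constructor
  · intro h
    refine ⟨h 0, ?_⟩
    have := h 1
    rwa [itY hY hZ b 0] at this
  · rintro ⟨h0, h1⟩ n
    cases n with
    | zero => exact h0
    | succ m => rw [itY hY hZ]; exact h1

lemma activeX_iff (hX : ∀ a : Fin k, (d (0, a)).1 = 1) (hY : ∀ a : Fin k, (d (1, a)).1 = 2)
    (hZ : ∀ a : Fin k, d (2, a) = (2, a)) {a : Fin k} {C : Finset (Fin 3 × Fin k)} :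
    (∀ n : ℕ, d^[n] (0, a) ∈ C) ↔
      ((0, a) ∈ C ∧ (1, pm d a) ∈ C ∧ (2, rm d (pm d a)) ∈ C) := by
  constructor
  · intro h
    refine ⟨h 0, ?_, ?_⟩
    · have := h 1
      rwa [Function.iterate_one, dXeq hX a] at this
    · have := h 2
      rwa [itX hX hY hZ a 0] at this
  · rintro ⟨h0, h1, h2⟩ n
    match n with
    | 0 => exact h0
    | 1 => rw [Function.iterate_one, dXeq hX a]; exact h1
    | (m + 2) => rw [itX hX hY hZ]; exact h2

lemma gammaEq (C : Finset (Fin 3 × Fin k)) :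
    gamma (fun _ => (1 : ℕ)) d C = (C.filter (fun i => ∀ n : ℕ, d^[n] i ∈ C)).card := by
  rw [gamma, Finset.card_filter]

lemma cardT (a b c : Fin k) :
    ({(0, a), (1, b), (2, c)} : Finset (Fin 3 × Fin k)).card = 3 := by
  rw [card_insert_of_notMem (by simp [Prod.ext_iff]),
    card_insert_of_notMem (by simp [Prod.ext_iff]), card_singleton]

lemma lb (hX : ∀ a : Fin k, (d (0, a)).1 = 1) (hY : ∀ a : Fin k, (d (1, a)).1 = 2)
    (hZ : ∀ a : Fin k, d (2, a) = (2, a))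
    (hp : Function.Injective (pm d)) (hr : Function.Injective (rm d))
    (a b c : Fin k) (hab : pm d a = b) (hbc : rm d b = c)
    (v : Fin 3 × Fin k) (hv : v = (0, a) ∨ v = (1, b) ∨ v = (2, c)) :
    2 ^ (2 * k - 2) ≤ swingCount (fun _ => 1) d 3 v := by
  set T : Finset (Fin 3 × Fin k) := {(0, a), (1, b), (2, c)} with hT
  have hvT : v ∈ T := by rcases hv with h | h | h <;> subst h <;> simp [hT]
  set W : Finset (Fin 3 × Fin k) :=
    ((({0, 1} : Finset (Fin 3)) ×ˢ (univ : Finset (Fin k)))) \ {(0, a), (1, b)} with hW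
  have hWmem : ∀ i ∈ W, i.1 ≠ 2 ∧ i ≠ (0, a) ∧ i ≠ (1, b) := by
    intro i hi
    rw [hW, mem_sdiff, mem_product] at hi
    obtain ⟨⟨h1, _⟩, h2⟩ := hi
    simp only [mem_insert, mem_singleton, not_or] at h2
    refine ⟨?_, h2.1, h2.2⟩
    intro h
    rw [h] at h1
    revert h1
    decide
  have hWT : ∀ i ∈ W, i ∉ T := by
    intro i hi hiT
    obtain ⟨h2, h0, h1⟩ := hWmem i hi
    rw [hT] at hiT
    simp only [mem_insert, mem_singleton] at hiT
    rcases hiT with h | h | h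
    · exact h0 h
    · exact h1 h
    · rw [h] at h2; exact h2 rfl
  have cardW : W.card = 2 * k - 2 := by
    have hsub : ({(0, a), (1, b)} : Finset (Fin 3 × Fin k)) ⊆
        (({0, 1} : Finset (Fin 3)) ×ˢ (univ : Finset (Fin k))) := by
      intro i hi
      simp only [mem_insert, mem_singleton] at hi
      rcases hi with h | h <;> subst h
      · exact mem_product.mpr ⟨show (0 : Fin 3) ∈ ({0, 1} : Finset (Fin 3)) by decide, mem_univ _⟩
      · exact mem_product.mpr ⟨show (1 : Fin 3) ∈ ({0, 1} : Finset (Fin 3)) by decide, mem_univ _⟩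
    rw [hW, card_sdiff_of_subset hsub, Finset.card_product,
      Finset.card_pair (show ((0 : Fin 3), a) ≠ ((1 : Fin 3), b) by simp [Prod.ext_iff]),
      (by decide : ({0, 1} : Finset (Fin 3)).card = 2), card_univ, Fintype.card_fin]
  have key : ∀ S ∈ W.powerset, (T.erase v ∪ S) ∈
      (((univ : Finset (Fin 3 × Fin k)).erase v).powerset.filter
        (fun C => swing (fun _ => 1) d 3 v C)) := by
    intro S hS
    rw [mem_powerset] at hS
    have hvnot : v ∉ T.erase v ∪ S := by
      rw [mem_union]
      rintro (h | h)
      · exact notMem_erase _ _ h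
      · exact hWT v (hS h) hvT
    set C := T.erase v ∪ S with hC
    have hZmem : ∀ c' : Fin k, ((2 : Fin 3), c') ∈ C → c' = c := by
      intro c' hc'
      rcases mem_union.mp hc' with h | h
      · have h2 := mem_of_mem_erase h
        rw [hT] at h2
        simp only [mem_insert, mem_singleton, Prod.ext_iff] at h2
        rcases h2 with ⟨h, _⟩ | ⟨h, _⟩ | ⟨_, h⟩
        · exact absurd h (by decide)
        · exact absurd h (by decide)
        · exact h
      · exact absurd rfl ((hWmem _ (hS h)).1)
    have hactive : ∀ i ∈ C, (∀ n : ℕ, d^[n] i ∈ C) → i ∈ T.erase v := by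
      intro i hiC hact
      rcases mem_union.mp hiC with h | h
      · exact h
      · exfalso
        obtain ⟨s, t⟩ := i
        obtain ⟨h2, h0, h1⟩ := hWmem _ (hS h)
        rcases fin3_cases s with rfl | rfl | rfl
        · have e2 : ((2 : Fin 3), rm d (pm d t)) ∈ C := by
            have := hact 2
            rwa [itX2 hX hY hZ t] at this
          have hc1 : rm d (pm d t) = c := hZmem _ e2
          have hptb : pm d t = b := hr (hc1.trans hbc.symm)
          have hta : t = a := hp (hptb.trans hab.symm)
          exact h0 (by rw [hta])
        · have e1 : ((2 : Fin 3), rm d t) ∈ C := by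
            have := hact 1
            rwa [itY1 hY hZ t] at this
          have : t = b := hr ((hZmem _ e1).trans hbc.symm)
          exact h1 (by rw [this])
        · exact h2 rfl
    have hnw : ¬ wins (fun _ => 1) d 3 C := by
      unfold wins
      rw [gammaEq]
      have hsub : C.filter (fun i => ∀ n : ℕ, d^[n] i ∈ C) ⊆ T.erase v := by
        intro i hi
        rw [mem_filter] at hi
        exact hactive i hi.1 hi.2
      have h1 := card_le_card hsub
      have h2 : (T.erase v).card = 2 := by
        rw [card_erase_of_mem hvT, hT, cardT]
      omega
    have hTsub : T ⊆ insert v C := by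
      intro t' ht'
      by_cases h : t' = v
      · rw [h]; exact mem_insert_self _ _
      · exact mem_insert_of_mem (mem_union_left _ (mem_erase.mpr ⟨h, ht'⟩))
    have hwin : wins (fun _ => 1) d 3 (insert v C) := by
      unfold wins
      rw [gammaEq]
      have hsub : T ⊆ (insert v C).filter (fun i => ∀ n : ℕ, d^[n] i ∈ insert v C) := by
        intro t' ht'
        rw [mem_filter]
        refine ⟨hTsub ht', ?_⟩
        have hxa : ((0 : Fin 3), a) ∈ insert v C := hTsub (by simp [hT])
        have hyb : ((1 : Fin 3), b) ∈ insert v C := hTsub (by simp [hT])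
        have hzc : ((2 : Fin 3), c) ∈ insert v C := hTsub (by simp [hT])
        rw [hT] at ht'
        simp only [mem_insert, mem_singleton] at ht'
        rcases ht' with h | h | h <;> subst h
        · rw [activeX_iff hX hY hZ, hab, hbc]
          exact ⟨hxa, hyb, hzc⟩
        · rw [activeY_iff hY hZ, hbc]
          exact ⟨hyb, hzc⟩
        · rw [activeZ_iff hZ]
          exact hzc
      calc (3 : ℕ) = T.card := by rw [hT, cardT]
        _ ≤ _ := card_le_card hsub
    rw [mem_filter, mem_powerset]
    refine ⟨?_, hnw, hwin⟩
    intro i hi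
    exact mem_erase.mpr ⟨fun h => hvnot (h ▸ hi), mem_univ i⟩
  have hrec : ∀ S ∈ W.powerset, (T.erase v ∪ S) ∩ W = S := by
    intro S hS
    rw [mem_powerset] at hS
    ext i
    simp only [mem_inter, mem_union]
    constructor
    · rintro ⟨h | h, hiW⟩
      · exact absurd (mem_of_mem_erase h) (hWT i hiW)
      · exact h
    · intro h
      exact ⟨Or.inr h, hS h⟩
  unfold swingCount
  calc 2 ^ (2 * k - 2) = W.powerset.card := by rw [card_powerset, cardW]
    _ ≤ _ := by
        refine Finset.card_le_card_of_injOn (fun S => T.erase v ∪ S) key ?_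
        intro S1 h1 S2 h2 he
        rw [← hrec S1 (Finset.mem_coe.mp h1), ← hrec S2 (Finset.mem_coe.mp h2)]
        simp only at he
        rw [he]
lemma ub (hX : ∀ a : Fin k, (d (0, a)).1 = 1) (hY : ∀ a : Fin k, (d (1, a)).1 = 2)
    (hZ : ∀ a : Fin k, d (2, a) = (2, a)) (a : Fin k) (w : Fin 3 × Fin k)
    (hw0 : w ≠ (0, a)) (hw1 : w ≠ (1, pm d a)) (hw2 : w.1 ≠ 2)
    (hwch : ∀ C : Finset (Fin 3 × Fin k), w ∈ C → (1, pm d a) ∈ C →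
      (2, rm d (pm d a)) ∈ C → ∀ n : ℕ, d^[n] w ∈ C) :
    swingCount (fun _ => 1) d 3 (0, a) ≤ 2 ^ (2 * k - 3) := by
  have dcoord : ∀ u : Fin 3 × Fin k, (d u).1 ≠ 0 := by
    intro u
    obtain ⟨s, t⟩ := u
    rcases fin3_cases s with rfl | rfl | rfl
    · rw [hX t]; decide
    · rw [hY t]; decide
    · simp [hZ t]
  have hkey : ∀ C : Finset (Fin 3 × Fin k), C ⊆ (univ : Finset (Fin 3 × Fin k)).erase (0, a) →
      swing (fun _ => 1) d 3 (0, a) C →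
      (1, pm d a) ∈ C ∧ (2, rm d (pm d a)) ∈ C ∧
        C.filter (fun i => ∀ n : ℕ, d^[n] i ∈ C) = {(1, pm d a), (2, rm d (pm d a))} := by
    intro C hCsub hsw
    have hxC : ((0 : Fin 3), a) ∉ C := fun h => (mem_erase.mp (hCsub h)).1 rfl
    obtain ⟨hnw, hwin0⟩ := hsw
    unfold wins at hnw hwin0
    rw [gammaEq] at hnw
    have hwin : 3 ≤ ((insert ((0 : Fin 3), a) C).filter
        (fun i => ∀ n : ℕ, d^[n] i ∈ insert ((0 : Fin 3), a) C)).card := by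
      rw [gammaEq] at hwin0
      exact hwin0
    have hmono : ((insert ((0 : Fin 3), a) C).filter
        (fun i => ∀ n : ℕ, d^[n] i ∈ insert ((0 : Fin 3), a) C)) ⊆
        insert ((0 : Fin 3), a) (C.filter (fun i => ∀ n : ℕ, d^[n] i ∈ C)) := by
      intro i hi
      rw [mem_filter] at hi
      obtain ⟨hiC, hact⟩ := hi
      rcases mem_insert.mp hiC with h | h
      · rw [h]; exact mem_insert_self _ _
      · refine mem_insert_of_mem (mem_filter.mpr ⟨h, fun n => ?_⟩)
        rcases mem_insert.mp (hact n) with he | he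
        · exfalso
          cases n with
          | zero =>
              rw [Function.iterate_zero_apply] at he
              rw [he] at h
              exact hxC h
          | succ m =>
              rw [Function.iterate_succ_apply'] at he
              have := dcoord (d^[m] i)
              rw [he] at this
              exact this rfl
        · exact he
    have hxact : ∀ n : ℕ, d^[n] ((0 : Fin 3), a) ∈ insert ((0 : Fin 3), a) C := by
      by_contra hna
      have hsub2 : ((insert ((0 : Fin 3), a) C).filter
          (fun i => ∀ n : ℕ, d^[n] i ∈ insert ((0 : Fin 3), a) C)) ⊆
          C.filter (fun i => ∀ n : ℕ, d^[n] i ∈ C) := by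
        intro i hi
        have h2 := hmono hi
        rcases mem_insert.mp h2 with h | h
        · exfalso
          rw [mem_filter] at hi
          exact hna (h ▸ hi.2)
        · exact h
      have := card_le_card hsub2
      omega
    have hyC : ((1 : Fin 3), pm d a) ∈ C := by
      have := hxact 1
      rw [Function.iterate_one, dXeq hX a] at this
      rcases mem_insert.mp this with h | h
      · exact absurd h (by simp [Prod.ext_iff])
      · exact h
    have hzC : ((2 : Fin 3), rm d (pm d a)) ∈ C := by
      have := hxact 2
      rw [itX2 hX hY hZ a] at this
      rcases mem_insert.mp this with h | h
      · exact absurd h (by simp [Prod.ext_iff])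
      · exact h
    have hcard2 : (C.filter (fun i => ∀ n : ℕ, d^[n] i ∈ C)).card = 2 := by
      have h1 := card_le_card hmono
      have h2 := card_insert_le ((0 : Fin 3), a) (C.filter (fun i => ∀ n : ℕ, d^[n] i ∈ C))
      omega
    have hsub3 : ({(1, pm d a), (2, rm d (pm d a))} : Finset (Fin 3 × Fin k)) ⊆
        C.filter (fun i => ∀ n : ℕ, d^[n] i ∈ C) := by
      intro i hi
      rcases mem_insert.mp hi with h | h
      · subst h
        exact mem_filter.mpr ⟨hyC, (activeY_iff hY hZ).mpr ⟨hyC, hzC⟩⟩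
      · rw [mem_singleton] at h
        subst h
        exact mem_filter.mpr ⟨hzC, (activeZ_iff hZ).mpr hzC⟩
    refine ⟨hyC, hzC, (eq_of_subset_of_card_le hsub3 ?_).symm⟩
    rw [hcard2, card_insert_of_notMem (by simp [Prod.ext_iff]), card_singleton]
  -- the counting
  have hf3 : ∀ s : Fin 3, s ≠ 2 → s ∈ ({0, 1} : Finset (Fin 3)) := by decide
  set P := (({0, 1} : Finset (Fin 3)) ×ˢ (univ : Finset (Fin k))) with hP
  have hxP : ((0 : Fin 3), a) ∈ P := mem_product.mpr ⟨hf3 0 (by decide), mem_univ _⟩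
  have hyP : ((1 : Fin 3), pm d a) ∈ P := mem_product.mpr ⟨hf3 1 (by decide), mem_univ _⟩
  have hwP : w ∈ P := by
    rw [hP, mem_product]
    exact ⟨hf3 _ hw2, mem_univ _⟩
  set G := ((P.erase ((0 : Fin 3), a)).erase ((1 : Fin 3), pm d a)).erase w with hG
  have hGcard : G.card = 2 * k - 3 := by
    have h1 : w ∈ (P.erase ((0 : Fin 3), a)).erase ((1 : Fin 3), pm d a) :=
      mem_erase.mpr ⟨hw1, mem_erase.mpr ⟨hw0, hwP⟩⟩
    have h2 : ((1 : Fin 3), pm d a) ∈ P.erase ((0 : Fin 3), a) :=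
      mem_erase.mpr ⟨by simp [Prod.ext_iff], hyP⟩
    have hPcard : P.card = 2 * k := by
      rw [hP, Finset.card_product, (by decide : ({0, 1} : Finset (Fin 3)).card = 2),
        card_univ, Fintype.card_fin]
    rw [hG, card_erase_of_mem h1, card_erase_of_mem h2, card_erase_of_mem hxP, hPcard]
    omega
  have hcount : swingCount (fun _ => 1) d 3 ((0 : Fin 3), a) ≤ G.powerset.card := by
    unfold swingCount
    refine card_le_card_of_injOn (fun C => C ∩ G) ?_ ?_
    · intro C _
      exact mem_powerset.mpr inter_subset_right
    · intro C1 hC1 C2 hC2 he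
      simp only [Finset.mem_coe, mem_filter, mem_powerset] at hC1 hC2
      obtain ⟨hC1p, hsw1⟩ := hC1
      obtain ⟨hC2p, hsw2⟩ := hC2
      have hrec : ∀ C : Finset (Fin 3 × Fin k), C ⊆ univ.erase ((0 : Fin 3), a) →
          swing (fun _ => 1) d 3 ((0 : Fin 3), a) C →
          C = insert ((1 : Fin 3), pm d a) (insert ((2 : Fin 3), rm d (pm d a)) (C ∩ G)) := by
        intro C hCp hsw
        obtain ⟨hyC, hzC, hfeq⟩ := hkey C hCp hsw
        have hxC : ((0 : Fin 3), a) ∉ C := fun h => (mem_erase.mp (hCp h)).1 rfl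
        have hzonly : ∀ c' : Fin k, ((2 : Fin 3), c') ∈ C → c' = rm d (pm d a) := by
          intro c' h
          have hmem : ((2 : Fin 3), c') ∈ C.filter (fun i => ∀ n : ℕ, d^[n] i ∈ C) :=
            mem_filter.mpr ⟨h, (activeZ_iff hZ).mpr h⟩
          rw [hfeq] at hmem
          rcases mem_insert.mp hmem with h2 | h2
          · exact absurd h2 (by simp [Prod.ext_iff])
          · rw [mem_singleton] at h2
            exact (Prod.ext_iff.mp h2).2
        have hwC : w ∉ C := by
          intro h
          have hmem : w ∈ C.filter (fun i => ∀ n : ℕ, d^[n] i ∈ C) :=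
            mem_filter.mpr ⟨h, hwch C h hyC hzC⟩
          rw [hfeq] at hmem
          rcases mem_insert.mp hmem with h2 | h2
          · exact hw1 h2
          · rw [mem_singleton] at h2
            rw [h2] at hw2
            exact hw2 rfl
        ext i
        constructor
        · intro hiC
          rw [mem_insert, mem_insert]
          by_cases e1 : i = ((1 : Fin 3), pm d a)
          · exact Or.inl e1
          by_cases e2 : i = ((2 : Fin 3), rm d (pm d a))
          · exact Or.inr (Or.inl e2)
          refine Or.inr (Or.inr (mem_inter.mpr ⟨hiC, ?_⟩))
          rw [hG]
          refine mem_erase.mpr ⟨fun h => hwC (h ▸ hiC),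
            mem_erase.mpr ⟨e1, mem_erase.mpr ⟨fun h => hxC (h ▸ hiC), ?_⟩⟩⟩
          obtain ⟨s, t⟩ := i
          rcases fin3_cases s with rfl | rfl | rfl
          · exact mem_product.mpr ⟨hf3 0 (by decide), mem_univ _⟩
          · exact mem_product.mpr ⟨hf3 1 (by decide), mem_univ _⟩
          · exact absurd (show ((2 : Fin 3), t) = ((2 : Fin 3), rm d (pm d a)) from
              Prod.ext rfl (hzonly t hiC)) e2
        · intro h
          rcases mem_insert.mp h with h2 | h2
          · rw [h2]; exact hyC
          rcases mem_insert.mp h2 with h3 | h3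
          · rw [h3]; exact hzC
          · exact (mem_inter.mp h3).1
      rw [hrec C1 hC1p hsw1, hrec C2 hC2p hsw2]
      simp only at he
      rw [he]
  rw [card_powerset, hGcard] at hcount
  exact hcount

lemma db_ge (hk : 1 ≤ k) (v : Fin 3 × Fin k)
    (h : 2 ^ (2 * k - 2) ≤ swingCount (fun _ => 1) d 3 v) :
    (1 : ℚ) / 2 ^ (k + 1) ≤ DB (fun _ => 1) d 3 v := by
  unfold DB
  simp only [Fintype.card_prod, Fintype.card_fin]
  rw [div_le_div_iff₀ (by positivity) (by positivity)]
  have hsc : (2 : ℚ) ^ (2 * k - 2) ≤ (swingCount (fun _ => 1) d 3 v : ℚ) := by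
    exact_mod_cast h
  calc (1 : ℚ) * 2 ^ (3 * k - 1) = 2 ^ (2 * k - 2) * 2 ^ (k + 1) := by
        rw [one_mul, ← pow_add]
        congr 1
        omega
    _ ≤ (swingCount (fun _ => 1) d 3 v : ℚ) * 2 ^ (k + 1) :=
        mul_le_mul_of_nonneg_right hsc (by positivity)

lemma db_lt (hk : 2 ≤ k) (v : Fin 3 × Fin k)
    (h : swingCount (fun _ => 1) d 3 v ≤ 2 ^ (2 * k - 3)) :
    DB (fun _ => 1) d 3 v < (1 : ℚ) / 2 ^ (k + 1) := by
  unfold DB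
  simp only [Fintype.card_prod, Fintype.card_fin]
  rw [div_lt_div_iff₀ (by positivity) (by positivity)]
  have hsc : (swingCount (fun _ => 1) d 3 v : ℚ) ≤ 2 ^ (2 * k - 3) := by
    exact_mod_cast h
  calc (swingCount (fun _ => 1) d 3 v : ℚ) * 2 ^ (k + 1)
      ≤ 2 ^ (2 * k - 3) * 2 ^ (k + 1) := mul_le_mul_of_nonneg_right hsc (by positivity)
    _ = 2 ^ (3 * k - 2) := by rw [← pow_add]; congr 1; omega
    _ < 2 ^ (3 * k - 1) := by
        apply pow_lt_pow_right₀ (by norm_num)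
        omega
    _ = 1 * 2 ^ (3 * k - 1) := (one_mul _).symm
lemma tree_mem (hX : ∀ a : Fin k, (d (0, a)).1 = 1) (hY : ∀ a : Fin k, (d (1, a)).1 = 2)
    (hZ : ∀ a : Fin k, d (2, a) = (2, a)) (c : Fin k) (i : Fin 3 × Fin k) :
    i ∈ treeOf d (2, c) ↔
      (i.1 = 0 ∧ rm d (pm d i.2) = c) ∨ (i.1 = 1 ∧ rm d i.2 = c) ∨ i = ((2 : Fin 3), c) := by
  unfold treeOf
  rw [mem_filter]
  simp only [mem_univ, true_and]
  obtain ⟨s, t⟩ := i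
  constructor
  · rintro ⟨n, hn⟩
    rcases fin3_cases s with rfl | rfl | rfl
    · refine Or.inl ⟨rfl, ?_⟩
      match n with
      | 0 =>
          rw [Function.iterate_zero_apply] at hn
          exact absurd hn (by simp [Prod.ext_iff])
      | 1 =>
          rw [Function.iterate_one, dXeq hX t] at hn
          exact absurd hn (by simp [Prod.ext_iff])
      | (m + 2) =>
          rw [itX hX hY hZ t m] at hn
          exact (Prod.ext_iff.mp hn).2
    · refine Or.inr (Or.inl ⟨rfl, ?_⟩)
      match n with
      | 0 =>
          rw [Function.iterate_zero_apply] at hn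
          exact absurd hn (by simp [Prod.ext_iff])
      | (m + 1) =>
          rw [itY hY hZ t m] at hn
          exact (Prod.ext_iff.mp hn).2
    · refine Or.inr (Or.inr ?_)
      rw [itZ hZ t n] at hn
      exact hn
  · intro h
    rcases fin3_cases s with rfl | rfl | rfl
    · obtain ⟨_, h2⟩ | ⟨h1, _⟩ | h1 := h
      · exact ⟨2, by rw [itX2 hX hY hZ t, h2]⟩
      · simp at h1
      · simp [Prod.ext_iff] at h1
    · obtain ⟨h1, _⟩ | ⟨_, h2⟩ | h1 := h
      · simp at h1
      · exact ⟨1, by rw [itY1 hY hZ t, h2]⟩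
      · simp [Prod.ext_iff] at h1
    · obtain ⟨h1, _⟩ | ⟨h1, _⟩ | h1 := h
      · simp at h1
      · simp at h1
      · exact ⟨0, by rw [Function.iterate_zero_apply, h1]⟩

lemma tree_eq (hX : ∀ a : Fin k, (d (0, a)).1 = 1) (hY : ∀ a : Fin k, (d (1, a)).1 = 2)
    (hZ : ∀ a : Fin k, d (2, a) = (2, a))
    (hp : Function.Injective (pm d)) (hr : Function.Injective (rm d))
    (a b c : Fin k) (hab : pm d a = b) (hbc : rm d b = c) :
    treeOf d (2, c) = {((0 : Fin 3), a), ((1 : Fin 3), b), ((2 : Fin 3), c)} := by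
  ext i
  rw [tree_mem hX hY hZ c i]
  simp only [mem_insert, mem_singleton]
  obtain ⟨s, t⟩ := i
  constructor
  · rintro (⟨h1, h2⟩ | ⟨h1, h2⟩ | h1)
    · exact Or.inl (Prod.ext h1 (hp ((hr (h2.trans hbc.symm)).trans hab.symm)))
    · exact Or.inr (Or.inl (Prod.ext h1 (hr (h2.trans hbc.symm))))
    · exact Or.inr (Or.inr h1)
  · rintro (h | h | h)
    · rw [h]
      exact Or.inl ⟨rfl, (congrArg (rm d) hab).trans hbc⟩
    · rw [h]
      exact Or.inr (Or.inl ⟨rfl, hbc⟩)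
    · exact Or.inr (Or.inr h)

lemma tree_card (hX : ∀ a : Fin k, (d (0, a)).1 = 1) (hY : ∀ a : Fin k, (d (1, a)).1 = 2)
    (hZ : ∀ a : Fin k, d (2, a) = (2, a)) (c : Fin k) :
    (treeOf d (2, c)).card =
      ((univ : Finset (Fin k)).filter (fun a => rm d (pm d a) = c)).card +
      ((univ : Finset (Fin k)).filter (fun b => rm d b = c)).card + 1 := by
  have hdecomp : treeOf d (2, c) =
      (((univ : Finset (Fin k)).filter (fun a => rm d (pm d a) = c)).image
        (fun a => ((0 : Fin 3), a))) ∪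
      ((((univ : Finset (Fin k)).filter (fun b => rm d b = c)).image
        (fun b => ((1 : Fin 3), b))) ∪ {((2 : Fin 3), c)}) := by
    ext i
    rw [tree_mem hX hY hZ c i]
    simp only [mem_union, mem_image, mem_filter, mem_univ, true_and, mem_singleton]
    obtain ⟨s, t⟩ := i
    constructor
    · rintro (⟨h1, h2⟩ | ⟨h1, h2⟩ | h1)
      · exact Or.inl ⟨t, h2, Prod.ext h1.symm rfl⟩
      · exact Or.inr (Or.inl ⟨t, h2, Prod.ext h1.symm rfl⟩)
      · exact Or.inr (Or.inr h1)
    · rintro (⟨x, hx, he⟩ | ⟨x, hx, he⟩ | he)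
      · rw [← he]
        exact Or.inl ⟨rfl, hx⟩
      · rw [← he]
        exact Or.inr (Or.inl ⟨rfl, hx⟩)
      · exact Or.inr (Or.inr he)
  have inj0 : Function.Injective (fun a : Fin k => ((0 : Fin 3), a)) :=
    fun x y hxy => (Prod.ext_iff.mp hxy).2
  have inj1 : Function.Injective (fun b : Fin k => ((1 : Fin 3), b)) :=
    fun x y hxy => (Prod.ext_iff.mp hxy).2
  have hd1 : Disjoint (((univ : Finset (Fin k)).filter (fun b => rm d b = c)).image
      (fun b => ((1 : Fin 3), b))) ({((2 : Fin 3), c)} : Finset (Fin 3 × Fin k)) := by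
    rw [Finset.disjoint_left]
    intro x hx hx2
    obtain ⟨b', _, rfl⟩ := mem_image.mp hx
    rw [mem_singleton] at hx2
    simp [Prod.ext_iff] at hx2
  have hd2 : Disjoint (((univ : Finset (Fin k)).filter (fun a => rm d (pm d a) = c)).image
      (fun a => ((0 : Fin 3), a)))
      ((((univ : Finset (Fin k)).filter (fun b => rm d b = c)).image
        (fun b => ((1 : Fin 3), b))) ∪ {((2 : Fin 3), c)}) := by
    rw [Finset.disjoint_left]
    intro x hx hx2
    obtain ⟨a', _, rfl⟩ := mem_image.mp hx
    rcases mem_union.mp hx2 with hcase | hcase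
    · obtain ⟨b', _, hb⟩ := mem_image.mp hcase
      simp [Prod.ext_iff] at hb
    · rw [mem_singleton] at hcase
      simp [Prod.ext_iff] at hcase
  rw [hdecomp, card_union_of_disjoint hd2, card_union_of_disjoint hd1,
    card_image_of_injective _ inj0, card_image_of_injective _ inj1, card_singleton]
  omega

lemma inj_of_trees (hX : ∀ a : Fin k, (d (0, a)).1 = 1) (hY : ∀ a : Fin k, (d (1, a)).1 = 2)
    (hZ : ∀ a : Fin k, d (2, a) = (2, a)) (h3 : ∀ c : Fin k, (treeOf d (2, c)).card = 3) :
    Function.Injective (pm d) ∧ Function.Injective (rm d) := by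
  have hfg : ∀ c : Fin k,
      ((univ : Finset (Fin k)).filter (fun a => rm d (pm d a) = c)).card +
      ((univ : Finset (Fin k)).filter (fun b => rm d b = c)).card + 1 = 3 := by
    intro c
    rw [← tree_card hX hY hZ c]
    exact h3 c
  have hf1 : ∀ c : Fin k, 1 ≤ ((univ : Finset (Fin k)).filter (fun b => rm d b = c)).card := by
    intro c
    by_contra hcon
    have hf0 : ((univ : Finset (Fin k)).filter (fun b => rm d b = c)).card = 0 := by omega
    have hemp := card_eq_zero.mp hf0
    have hg0 : ((univ : Finset (Fin k)).filter (fun a => rm d (pm d a) = c)).card = 0 := by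
      rw [card_eq_zero, filter_eq_empty_iff]
      intro a _ hc
      have hmem : pm d a ∈ (univ : Finset (Fin k)).filter (fun b => rm d b = c) :=
        mem_filter.mpr ⟨mem_univ _, hc⟩
      rw [hemp] at hmem
      exact absurd hmem (notMem_empty _)
    have := hfg c
    omega
  have hsum : (∑ c : Fin k, ((univ : Finset (Fin k)).filter (fun b => rm d b = c)).card) = k := by
    have := Finset.card_eq_sum_card_fiberwise (f := rm d) (s := (univ : Finset (Fin k)))
      (t := (univ : Finset (Fin k))) (fun x _ => mem_univ _)
    rw [card_univ, Fintype.card_fin] at this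
    exact this.symm
  have hfeq : ∀ c ∈ (univ : Finset (Fin k)),
      (1 : ℕ) = ((univ : Finset (Fin k)).filter (fun b => rm d b = c)).card := by
    rw [← Finset.sum_eq_sum_iff_of_le (fun i _ => hf1 i), hsum]
    simp
  have hrinj : Function.Injective (rm d) := by
    intro b b' hbb
    have h1 : b ∈ (univ : Finset (Fin k)).filter (fun x => rm d x = rm d b') :=
      mem_filter.mpr ⟨mem_univ _, hbb⟩
    have h2 : b' ∈ (univ : Finset (Fin k)).filter (fun x => rm d x = rm d b') :=
      mem_filter.mpr ⟨mem_univ _, rfl⟩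
    exact Finset.card_le_one.mp (le_of_eq (hfeq (rm d b') (mem_univ _)).symm) b h1 b' h2
  refine ⟨?_, hrinj⟩
  intro a a' ha
  have hg1 : ((univ : Finset (Fin k)).filter
      (fun x => rm d (pm d x) = rm d (pm d a'))).card = 1 := by
    have e1 := hfg (rm d (pm d a'))
    have e2 := hfeq (rm d (pm d a')) (mem_univ _)
    omega
  have h1 : a ∈ (univ : Finset (Fin k)).filter (fun x => rm d (pm d x) = rm d (pm d a')) :=
    mem_filter.mpr ⟨mem_univ _, by rw [ha]⟩
  have h2 : a' ∈ (univ : Finset (Fin k)).filter (fun x => rm d (pm d x) = rm d (pm d a')) :=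
    mem_filter.mpr ⟨mem_univ _, rfl⟩
  exact Finset.card_le_one.mp (le_of_eq hg1) a h1 a' h2

end Stmt17Aux
/-- In the MMWP 3D-matching gadget with voters
V_X ∪ V_Y ∪ V_Z = {0,1,2} × Fin k (|X| = |Y| = |Z| = k), unit weights, quota 3,
where every V_X voter delegates to a V_Y voter, every V_Y voter delegates to a
V_Z voter, and every V_Z voter is a guru: the minimum delegative Banzhaf measure
over all voters is at least 2^(-k-1) iff every delegation subtree rooted at a
V_Z vertex has exactly 3 vertices. -/
theorem stmt17 (k : ℕ) (d : Fin 3 × Fin k → Fin 3 × Fin k)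
    (hX : ∀ a : Fin k, (d (0, a)).1 = 1)
    (hY : ∀ a : Fin k, (d (1, a)).1 = 2)
    (hZ : ∀ a : Fin k, d (2, a) = (2, a)) :
    (∀ v : Fin 3 × Fin k, (1 : ℚ) / 2 ^ (k + 1) ≤ DB (fun _ => 1) d 3 v) ↔
      (∀ a : Fin k, (treeOf d (2, a)).card = 3) := by
  constructor
  · intro h
    have hp : Function.Injective (pm d) := by
      intro a a' ha
      by_contra hne
      have hk2 : 2 ≤ k := by
        have hnt : Nontrivial (Fin k) := ⟨⟨a, a', hne⟩⟩
        have := Fintype.one_lt_card_iff_nontrivial.mpr hnt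
        rw [Fintype.card_fin] at this
        omega
      have hub : swingCount (fun _ => 1) d 3 ((0 : Fin 3), a') ≤ 2 ^ (2 * k - 3) := by
        apply ub hX hY hZ a' ((0 : Fin 3), a)
        · exact fun hcon => hne (Prod.ext_iff.mp hcon).2
        · simp [Prod.ext_iff]
        · simp
        · intro C h0 h1 h2 n
          match n with
          | 0 => exact h0
          | 1 =>
              rw [Function.iterate_one, dXeq hX a, ha]
              exact h1
          | (m + 2) =>
              rw [itX hX hY hZ a m, ha]
              exact h2
      exact absurd (h (0, a')) (not_le.mpr (db_lt hk2 _ hub))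
    have hps : Function.Surjective (pm d) := Finite.injective_iff_surjective.mp hp
    have hr : Function.Injective (rm d) := by
      intro b b' hbb
      by_contra hne
      have hk2 : 2 ≤ k := by
        have hnt : Nontrivial (Fin k) := ⟨⟨b, b', hne⟩⟩
        have := Fintype.one_lt_card_iff_nontrivial.mpr hnt
        rw [Fintype.card_fin] at this
        omega
      obtain ⟨a, hab⟩ := hps b
      have hub : swingCount (fun _ => 1) d 3 ((0 : Fin 3), a) ≤ 2 ^ (2 * k - 3) := by
        apply ub hX hY hZ a ((1 : Fin 3), b')
        · simp [Prod.ext_iff]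
        · exact fun hcon => hne (((Prod.ext_iff.mp hcon).2.trans hab).symm)
        · simp
        · intro C h0 h1 h2 n
          match n with
          | 0 => exact h0
          | (m + 1) =>
              rw [itY hY hZ b' m]
              have he : rm d b' = rm d (pm d a) := by rw [hab, ← hbb]
              rw [he]
              exact h2
      exact absurd (h (0, a)) (not_le.mpr (db_lt hk2 _ hub))
    have hrs : Function.Surjective (rm d) := Finite.injective_iff_surjective.mp hr
    intro c
    obtain ⟨b, hbc⟩ := hrs c
    obtain ⟨a, hab⟩ := hps b
    rw [tree_eq hX hY hZ hp hr a b c hab hbc]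
    exact cardT a b c
  · intro h3 v
    obtain ⟨hp, hr⟩ := inj_of_trees hX hY hZ h3
    have hps : Function.Surjective (pm d) := Finite.injective_iff_surjective.mp hp
    have hrs : Function.Surjective (rm d) := Finite.injective_iff_surjective.mp hr
    obtain ⟨s, t⟩ := v
    have hk1 : 1 ≤ k := t.pos
    rcases fin3_cases s with rfl | rfl | rfl
    · exact db_ge hk1 _
        (lb hX hY hZ hp hr t (pm d t) (rm d (pm d t)) rfl rfl _ (Or.inl rfl))
    · obtain ⟨a, hab⟩ := hps t
      exact db_ge hk1 _
        (lb hX hY hZ hp hr a t (rm d t) hab rfl _ (Or.inr (Or.inl rfl)))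
    · obtain ⟨b, hbc⟩ := hrs t
      obtain ⟨a, hab⟩ := hps b
      exact db_ge hk1 _
        (lb hX hY hZ hp hr a b t hab hbc _ (Or.inr (Or.inr rfl)))
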